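/- arXiv:2203.13435 — 2 statements merged into one kernel-verified Lean document; each statement's English description precedes it below -/
import Mathlib

section
/- Let T = (V, A) be a polytree, let I⁰, Iᵗ be independent sets with |I⁰| = |Iᵗ| that are reconfigurable, and consider any reconfiguration sequence from I⁰ to Iᵗ. For each arc e ∈ A, the number of moves in the sequence that slide a token along e equals w(e; I⁰, Iᵗ) = |C⁻_e ∩ I⁰| − |C⁻_e ∩ Iᵗ|. -/
open scoped Classical

variable {V : Type*}

/-- The underlying undirected simple graph of a digraph given by its arc relation. -/
def underlying (A : V → V → Prop) : SimpleGraph V := SimpleGraph.fromRel A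

/-- A polytree: a loopless digraph without antiparallel arcs whose underlying graph is a tree. -/
def IsPolytree (A : V → V → Prop) : Prop :=
  (∀ v, ¬ A v v) ∧ (∀ u v, A u v → ¬ A v u) ∧ (underlying A).IsTree

/-- `x` lies in the weakly connected component of `T - (a,b)` containing the tail `a`. -/
def InCminus (A : V → V → Prop) (a b x : V) : Prop :=
  ((underlying A).deleteEdges {s(a, b)}).Reachable a x

/-- `w((a,b); X, Y) = |C⁻ ∩ X| - |C⁻ ∩ Y|`. -/
noncomputable def wArc [Fintype V] [DecidableEq V] (A : V → V → Prop)
    (X Y : Finset V) (a b : V) : ℤ :=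
  ((X.filter fun x => InCminus A a b x).card : ℤ) -
    ((Y.filter fun x => InCminus A a b x).card : ℤ)

/-- Independence in the underlying undirected graph. -/
def IndepF (A : V → V → Prop) (I : Finset V) : Prop :=
  ∀ u ∈ I, ∀ v ∈ I, ¬ (underlying A).Adj u v

/-- One token-sliding step along an arc, in its direction. -/
def IsStep [DecidableEq V] (A : V → V → Prop) (I J : Finset V) : Prop :=
  ∃ u v, A u v ∧ I \ J = {u} ∧ J \ I = {v}

/-- A reconfiguration sequence of independent sets under directed token sliding. -/
def IsReconfSeq [DecidableEq V] (A : V → V → Prop) {ℓ : ℕ}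
    (f : Fin (ℓ + 1) → Finset V) : Prop :=
  (∀ i, IndepF A (f i)) ∧ ∀ i : Fin ℓ, IsStep A (f i.castSucc) (f i.succ)

/-- `I` is reconfigurable into `J` under directed token sliding. -/
def Reconfigurable [DecidableEq V] (A : V → V → Prop) (I J : Finset V) : Prop :=
  ∃ (ℓ : ℕ) (f : Fin (ℓ + 1) → Finset V),
    IsReconfSeq A f ∧ f 0 = I ∧ f (Fin.last ℓ) = J

/-- A directed path in the digraph `A`, given by its (distinct) vertices in order. -/
structure DirPath (A : V → V → Prop) where
  len : ℕ
  vtx : Fin (len + 1) → V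
  inj : Function.Injective vtx
  arc : ∀ i : Fin len, A (vtx i.castSucc) (vtx i.succ)

namespace DirPath
variable {A : V → V → Prop}
/-- The source of a directed path. -/
def src (p : DirPath A) : V := p.vtx 0
/-- The sink of a directed path. -/
def snk (p : DirPath A) : V := p.vtx (Fin.last p.len)
/-- The second vertex `s'(P)` of a directed path. -/
def sndVtx (p : DirPath A) : V := p.vtx ⟨min 1 p.len, by omega⟩
/-- The second-to-last vertex `t'(P)` of a directed path. -/
def penVtx (p : DirPath A) : V := p.vtx ⟨p.len - 1, by omega⟩
/-- `v` is a vertex of the path `p`. -/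
def mem (p : DirPath A) (v : V) : Prop := ∃ i, p.vtx i = v
/-- `x` is an internal vertex of `p` (neither source nor sink). -/
def internal (p : DirPath A) (x : V) : Prop :=
  ∃ i : Fin (p.len + 1), p.vtx i = x ∧ i ≠ 0 ∧ i ≠ Fin.last p.len
end DirPath

/-- A directed path matching from `X` to `Y`: distinct sources forming `X`,
distinct sinks forming `Y`. -/
def IsDPM [DecidableEq V] {A : V → V → Prop} {k : ℕ}
    (X Y : Finset V) (P : Fin k → DirPath A) : Prop :=
  (Function.Injective fun i => (P i).src) ∧ (Function.Injective fun i => (P i).snk) ∧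
  (Finset.univ.image fun i => (P i).src) = X ∧ (Finset.univ.image fun i => (P i).snk) = Y

/-- The path-set conditions (P1)–(P4). -/
def PathSetConds [DecidableEq V] {A : V → V → Prop} {k : ℕ}
    (X Y : Finset V) (P : Fin k → DirPath A) : Prop :=
  (∀ i, 2 ≤ (P i).len) ∧ IsDPM X Y P ∧
  (∀ i j, i ≠ j → (P i).sndVtx ≠ (P j).sndVtx) ∧
  (∀ i j, i ≠ j → (P i).penVtx ≠ (P j).penVtx)

/-- Length of the (unique, when it exists) directed path from `u` to `v`. -/
noncomputable def ddist (A : V → V → Prop) (u v : V) : ℕ :=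
  sInf {n | ∃ p : DirPath A, p.src = u ∧ p.snk = v ∧ p.len = n}

/-- A biased path pair: a common internal vertex `x` with
`dist(s(p),x) > dist(s(q),x)` and `dist(x,t(p)) > dist(x,t(q))`. -/
def BiasedPair (A : V → V → Prop) (p q : DirPath A) : Prop :=
  ∃ x, p.internal x ∧ q.internal x ∧
    ddist A q.src x < ddist A p.src x ∧ ddist A x q.snk < ddist A x p.snk

/-- A rigid token: `v ∈ X ∩ Y` and all incident arcs have `w`-value `0`. -/
def RigidTok [Fintype V] [DecidableEq V] (A : V → V → Prop) (X Y : Finset V) (v : V) : Prop :=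
  v ∈ X ∧ v ∈ Y ∧ ∀ a b, A a b → (a = v ∨ b = v) → wArc A X Y a b = 0

/-- A blocking arc: `w((u,v)) = 1` and every other arc incident to `u` or `v`
has `w`-value `0`. -/
def BlockingArc [Fintype V] [DecidableEq V] (A : V → V → Prop) (X Y : Finset V)
    (u v : V) : Prop :=
  A u v ∧ wArc A X Y u v = 1 ∧
    ∀ a b, A a b → (a, b) ≠ (u, v) → (a = u ∨ b = u ∨ a = v ∨ b = v) →
      wArc A X Y a b = 0

/-- A trajectory of a single token along a reconfiguration sequence. -/
def IsTrajectory [DecidableEq V] (A : V → V → Prop) {ℓ : ℕ}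
    (f : Fin (ℓ + 1) → Finset V) (g : Fin (ℓ + 1) → V) : Prop :=
  (∀ i, g i ∈ f i) ∧ ∀ i : Fin ℓ,
    g i.succ = g i.castSucc ∨
      (f i.castSucc \ f i.succ = {g i.castSucc} ∧ f i.succ \ f i.castSucc = {g i.succ})

/-- Number of steps of a reconfiguration sequence sliding a token from `u` to `v`. -/
noncomputable def movesAlong [DecidableEq V] {ℓ : ℕ} (f : Fin (ℓ + 1) → Finset V)
    (u v : V) : ℕ :=
  (Finset.univ.filter fun i : Fin ℓ =>
    f i.castSucc \ f i.succ = {u} ∧ f i.succ \ f i.castSucc = {v}).card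

/-- Number of forward arc traversals of a walk with vertex list `l`. -/
noncomputable def fwdCount (A : V → V → Prop) (l : List V) : ℕ :=
  (l.zip l.tail).countP fun p => decide (A p.1 p.2)

/-- Number of reverse arc traversals of a walk with vertex list `l`. -/
noncomputable def revCount (A : V → V → Prop) (l : List V) : ℕ :=
  (l.zip l.tail).countP fun p => decide (A p.2 p.1)

/-- Number of traversals of the ordered pair `(a, b)` by a walk with vertex list `l`. -/
def traverseCount [DecidableEq V] (l : List V) (a b : V) : ℕ :=
  (l.zip l.tail).count (a, b)

/-- A vertex `v` touches a directed path `p` if `N[v]` meets the vertex set of `p`. -/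
def Touches (A : V → V → Prop) (v : V) (p : DirPath A) : Prop :=
  ∃ u, p.mem u ∧ (u = v ∨ (underlying A).Adj v u)

/-- Independence in an undirected graph (for undirected token sliding). -/
def UIndep (G : SimpleGraph V) (I : Finset V) : Prop :=
  ∀ u ∈ I, ∀ v ∈ I, ¬ G.Adj u v

/-- One undirected token-sliding step along an edge. -/
def UIsStep [DecidableEq V] (G : SimpleGraph V) (I J : Finset V) : Prop :=
  ∃ u v, G.Adj u v ∧ I \ J = {u} ∧ J \ I = {v}

/-- Reconfigurability under (undirected) token sliding. -/
def UReconfigurable [DecidableEq V] (G : SimpleGraph V) (I J : Finset V) : Prop :=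
  ∃ (ℓ : ℕ) (f : Fin (ℓ + 1) → Finset V),
    (∀ i, UIndep G (f i)) ∧ (∀ i : Fin ℓ, UIsStep G (f i.castSucc) (f i.succ)) ∧
    f 0 = I ∧ f (Fin.last ℓ) = J

section Aux
variable {V : Type*}

lemma underlying_adj {A : V → V → Prop} (hT : IsPolytree A) {a b : V} (hab : A a b) :
    (underlying A).Adj a b := by
  refine ⟨fun h => hT.1 a (h ▸ hab), Or.inl hab⟩

lemma inC_self (A : V → V → Prop) (a b : V) : InCminus A a b a := SimpleGraph.Reachable.refl a

lemma not_inC_head {A : V → V → Prop} (hT : IsPolytree A) {a b : V} (hab : A a b) :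
    ¬ InCminus A a b b := by
  have hadj := underlying_adj hT hab
  have hb : (underlying A).IsBridge s(a, b) :=
    (SimpleGraph.isAcyclic_iff_forall_adj_isBridge.mp hT.2.2.IsAcyclic) hadj
  have hle : (underlying A).deleteEdges {s(a, b)} ≤
      underlying A \ SimpleGraph.fromEdgeSet {s(a, b)} := by
    intro u v h
    rw [SimpleGraph.deleteEdges_adj] at h
    exact ⟨h.1, fun h' => h.2 ((SimpleGraph.fromEdgeSet_adj _).mp h').1⟩
  intro hr
  exact (SimpleGraph.isBridge_iff.mp hb) hr

lemma inC_iff_of_step {A : V → V → Prop} (hT : IsPolytree A) {a b u v : V}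
    (hab : A a b) (huv : A u v) (hne : (u, v) ≠ (a, b)) :
    (InCminus A a b u ↔ InCminus A a b v) := by
  have hedge : s(u, v) ≠ s(a, b) := by
    intro h
    rcases Sym2.eq_iff.mp h with ⟨h1, h2⟩ | ⟨h1, h2⟩
    · exact hne (by rw [h1, h2])
    · subst h1; subst h2; exact hT.2.1 _ _ huv hab
  have hadj : ((underlying A).deleteEdges {s(a, b)}).Adj u v := by
    rw [SimpleGraph.deleteEdges_adj]
    exact ⟨underlying_adj hT huv, by simpa using hedge⟩
  exact ⟨fun h => h.trans hadj.reachable, fun h => h.trans hadj.symm.reachable⟩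

lemma filter_card_step [DecidableEq V] {I J : Finset V} {u v : V}
    (hIJ : I \ J = {u}) (hJI : J \ I = {v}) (P : V → Prop) [DecidablePred P] :
    ((I.filter P).card : ℤ) - ((J.filter P).card : ℤ)
      = (if P u then 1 else 0) - (if P v then 1 else 0) := by
  have hI : ((I.filter P).card : ℤ)
      = (((I \ J).filter P).card : ℤ) + (((I ∩ J).filter P).card : ℤ) := by
    rw [← Nat.cast_add, ← Finset.card_union_of_disjoint, ← Finset.filter_union,
      Finset.sdiff_union_inter]
    exact Finset.disjoint_filter_filter (Finset.disjoint_sdiff_inter I J)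
  have hJ : ((J.filter P).card : ℤ)
      = (((J \ I).filter P).card : ℤ) + (((J ∩ I).filter P).card : ℤ) := by
    rw [← Nat.cast_add, ← Finset.card_union_of_disjoint, ← Finset.filter_union,
      Finset.sdiff_union_inter]
    exact Finset.disjoint_filter_filter (Finset.disjoint_sdiff_inter J I)
  rw [hI, hJ, hIJ, hJI, Finset.inter_comm I J]
  have h1 : ((({u} : Finset V).filter P).card : ℤ) = if P u then 1 else 0 := by
    by_cases h : P u <;> simp [Finset.filter_singleton, h]
  have h2 : ((({v} : Finset V).filter P).card : ℤ) = if P v then 1 else 0 := by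
    by_cases h : P v <;> simp [Finset.filter_singleton, h]
  rw [h1, h2]; ring

lemma step_count {A : V → V → Prop} [DecidableEq V] (hT : IsPolytree A) {a b : V}
    (hab : A a b) {I J : Finset V} (hstep : IsStep A I J) :
    ((if I \ J = {a} ∧ J \ I = {b} then 1 else 0 : ℤ))
      = ((I.filter (InCminus A a b)).card : ℤ) - ((J.filter (InCminus A a b)).card : ℤ) := by
  obtain ⟨u, v, huv, hIJ, hJI⟩ := hstep
  rw [filter_card_step hIJ hJI]
  by_cases h : (u, v) = (a, b)
  · obtain ⟨h1, h2⟩ := Prod.ext_iff.mp h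
    subst h1; subst h2
    rw [if_pos ⟨hIJ, hJI⟩, if_pos (inC_self A u v), if_neg (not_inC_head hT huv)]
    ring
  · have hiff := inC_iff_of_step hT hab huv h
    rw [if_neg, if_congr hiff rfl rfl, sub_self]
    rintro ⟨h1, h2⟩
    rw [hIJ] at h1; rw [hJI] at h2
    exact h (by rw [Finset.singleton_inj.mp h1, Finset.singleton_inj.mp h2])

lemma moves_eq {A : V → V → Prop} [DecidableEq V] (hT : IsPolytree A) {a b : V}
    (hab : A a b) : ∀ (ℓ : ℕ) (f : Fin (ℓ + 1) → Finset V),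
    (∀ i : Fin ℓ, IsStep A (f i.castSucc) (f i.succ)) →
    (movesAlong f a b : ℤ)
      = (((f 0).filter (InCminus A a b)).card : ℤ)
        - (((f (Fin.last ℓ)).filter (InCminus A a b)).card : ℤ) := by
  intro ℓ
  induction ℓ with
  | zero => intro f _; simp [movesAlong, Fin.last]
  | succ n ih =>
    intro f hsteps
    have hrec : (movesAlong f a b : ℤ)
        = (if f (0 : Fin (n + 1)).castSucc \ f (0 : Fin (n + 1)).succ = {a}
              ∧ f (0 : Fin (n + 1)).succ \ f (0 : Fin (n + 1)).castSucc = {b} then 1 else 0)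
          + (movesAlong (fun i => f i.succ) a b : ℤ) := by
      rw [movesAlong, movesAlong, Finset.card_filter, Finset.card_filter,
        Nat.cast_sum, Nat.cast_sum, Fin.sum_univ_succ]
      rw [Finset.sum_congr rfl (fun (i : Fin n) _ => by
        rw [← Fin.succ_castSucc i])]
      rw [Nat.cast_ite, Nat.cast_one, Nat.cast_zero]
    rw [hrec, ih (fun i => f i.succ) (fun i => by
      have h1 : (i.succ : Fin (n + 1)).castSucc = (i.castSucc : Fin (n + 1)).succ :=
        (Fin.succ_castSucc i).symm
      have := hsteps i.succ
      rwa [h1] at this),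
      step_count hT hab (hsteps 0)]
    have h0 : (0 : Fin (n + 1)).castSucc = (0 : Fin (n + 2)) := rfl
    have hlast : ((Fin.last n).succ : Fin (n + 2)) = Fin.last (n + 1) := by
      ext; simp [Fin.last]
    rw [h0, hlast]
    ring

end Aux

/-- In any reconfiguration sequence from `I⁰` to `Iᵗ`, the number of
moves sliding a token along an arc `e = (a,b)` equals `w(e; I⁰, Iᵗ)`. -/
theorem stmt_4 [Fintype V] [DecidableEq V] (A : V → V → Prop) (hT : IsPolytree A)
    (I0 It : Finset V) (h0 : IndepF A I0) (ht : IndepF A It) (hcard : I0.card = It.card)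
    {ℓ : ℕ} (f : Fin (ℓ + 1) → Finset V) (hf : IsReconfSeq A f)
    (hstart : f 0 = I0) (hend : f (Fin.last ℓ) = It) :
    ∀ a b, A a b → (movesAlong f a b : ℤ) = wArc A I0 It a b := by
  intro a b hab
  rw [moves_eq hT hab ℓ f hf.2, hstart, hend, wArc]
end

section
/- Let T = (V, A) be a polytree and I⁰, Iᵗ independent sets with |I⁰| = |Iᵗ| such that I⁰ is reconfigurable into Iᵗ under directed token sliding. Define R := {v ∈ I⁰ ∩ Iᵗ : w(e; I⁰, Iᵗ) = 0 for all arcs e incident to v}. Then in every reconfiguration sequence from I⁰ to Iᵗ, the set of vertices whose token never moves is exactly R. -/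
open scoped Classical

variable {V : Type*}

section AuxStmt5

variable [Fintype V] [DecidableEq V] {A : V → V → Prop}

lemma underlying_adj_of_arc (hT : IsPolytree A) {u v : V} (h : A u v) :
    (underlying A).Adj u v := by
  have hne : u ≠ v := by rintro rfl; exact hT.1 u h
  exact (SimpleGraph.fromRel_adj A u v).mpr ⟨hne, Or.inl h⟩

lemma inCminus_self {a b : V} : InCminus A a b a := SimpleGraph.Reachable.refl a

lemma not_inCminus_head (hT : IsPolytree A) {a b : V} (hab : A a b) :
    ¬ InCminus A a b b := by
  have hadj : (underlying A).Adj a b := underlying_adj_of_arc hT hab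
  have hbr := (SimpleGraph.isAcyclic_iff_forall_adj_isBridge.mp hT.2.2.2) hadj
  exact SimpleGraph.isBridge_iff.mp hbr

lemma inCminus_iff_of_adj {a b u v : V}
    (hadj : (underlying A).Adj u v) (hne : s(u, v) ≠ s(a, b)) :
    (InCminus A a b u ↔ InCminus A a b v) := by
  have hadj' : ((underlying A).deleteEdges {s(a, b)}).Adj u v := by
    rw [SimpleGraph.deleteEdges_adj]
    exact ⟨hadj, by simpa using hne⟩
  exact ⟨fun h => h.trans hadj'.reachable, fun h => h.trans hadj'.symm.reachable⟩

lemma card_filter_step {I J : Finset V} {u v : V}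
    (h1 : I \ J = {u}) (h2 : J \ I = {v}) (p : V → Prop) [DecidablePred p] :
    (J.filter p).card + (if p u then 1 else 0)
      = (I.filter p).card + (if p v then 1 else 0) := by
  have hu : u ∈ I \ J := by rw [h1]; exact Finset.mem_singleton_self u
  have hv : v ∈ J \ I := by rw [h2]; exact Finset.mem_singleton_self v
  have huI : u ∈ I := (Finset.mem_sdiff.mp hu).1
  have huJ : u ∉ J := (Finset.mem_sdiff.mp hu).2
  have hvJ : v ∈ J := (Finset.mem_sdiff.mp hv).1
  have hvI : v ∉ I := (Finset.mem_sdiff.mp hv).2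
  have hJ : J = insert v (I.erase u) := by
    ext x
    simp only [Finset.mem_insert, Finset.mem_erase]
    constructor
    · intro hx
      by_cases hxI : x ∈ I
      · right
        refine ⟨fun h => huJ (h ▸ hx), hxI⟩
      · left
        have : x ∈ J \ I := Finset.mem_sdiff.mpr ⟨hx, hxI⟩
        rw [h2] at this
        exact Finset.mem_singleton.mp this
    · rintro (rfl | ⟨hxu, hxI⟩)
      · exact hvJ
      · by_contra hxJ
        have : x ∈ I \ J := Finset.mem_sdiff.mpr ⟨hxI, hxJ⟩
        rw [h1] at this
        exact hxu (Finset.mem_singleton.mp this)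
  have hvne : v ∉ I.erase u := fun h => hvI (Finset.mem_of_mem_erase h)
  have cJ : (J.filter p).card
      = ((I.erase u).filter p).card + (if p v then 1 else 0) := by
    rw [hJ, Finset.filter_insert]
    split_ifs with h
    · rw [Finset.card_insert_of_notMem (fun hm => hvne (Finset.mem_of_mem_filter v hm))]
    · simp
  have cI : (I.filter p).card
      = ((I.erase u).filter p).card + (if p u then 1 else 0) := by
    conv_lhs => rw [(Finset.insert_erase huI).symm]
    rw [Finset.filter_insert]
    split_ifs with h
    · rw [Finset.card_insert_of_notMem
        (fun hm => (Finset.notMem_erase u I) (Finset.mem_of_mem_filter u hm))]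
    · simp
  omega

lemma slide_decrease (hT : IsPolytree A) {a b : V} (hab : A a b) {I J : Finset V}
    (h1 : I \ J = {a}) (h2 : J \ I = {b}) :
    (J.filter fun x => InCminus A a b x).card + 1
      = (I.filter fun x => InCminus A a b x).card := by
  have key := card_filter_step h1 h2 (fun x => InCminus A a b x)
  have hpa : InCminus A a b a := inCminus_self
  have hpb : ¬ InCminus A a b b := not_inCminus_head hT hab
  simp only [if_pos hpa, if_neg hpb] at key
  omega

lemma step_effect (hT : IsPolytree A) {a b : V} (hab : A a b) {I J : Finset V}
    (hs : IsStep A I J) :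
    (J.filter fun x => InCminus A a b x).card
        = (I.filter fun x => InCminus A a b x).card
      ∨ (I \ J = {a} ∧ J \ I = {b}) := by
  obtain ⟨u, v, huv, h1, h2⟩ := hs
  by_cases hcase : u = a ∧ v = b
  · exact Or.inr ⟨hcase.1 ▸ h1, hcase.2 ▸ h2⟩
  · left
    have hne : s(u, v) ≠ s(a, b) := by
      intro h
      rcases Sym2.eq_iff.mp h with ⟨rfl, rfl⟩ | ⟨rfl, rfl⟩
      · exact hcase ⟨rfl, rfl⟩
      · exact hT.2.1 _ _ hab huv
    have hiff : InCminus A a b u ↔ InCminus A a b v :=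
      inCminus_iff_of_adj (underlying_adj_of_arc hT huv) hne
    have key := card_filter_step h1 h2 (fun x => InCminus A a b x)
    by_cases hp : InCminus A a b u
    · rw [if_pos hp, if_pos (hiff.mp hp)] at key; omega
    · rw [if_neg hp, if_neg (fun h => hp (hiff.mpr h))] at key; omega

lemma warc_zero_iff (hT : IsPolytree A) {a b : V} (hab : A a b) {ℓ : ℕ}
    {f : Fin (ℓ + 1) → Finset V}
    (hstep : ∀ i : Fin ℓ, IsStep A (f i.castSucc) (f i.succ)) :
    wArc A (f 0) (f (Fin.last ℓ)) a b = 0 ↔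
      ∀ i : Fin ℓ,
        ¬ (f i.castSucc \ f i.succ = {a} ∧ f i.succ \ f i.castSucc = {b}) := by
  have hle : ∀ i : Fin ℓ,
      ((f i.succ).filter fun x => InCminus A a b x).card
        ≤ ((f i.castSucc).filter fun x => InCminus A a b x).card := by
    intro i
    rcases step_effect hT hab (hstep i) with h | ⟨h1, h2⟩
    · exact le_of_eq h
    · have := slide_decrease hT hab h1 h2
      omega
  have hub : ∀ j : Fin (ℓ + 1),
      ((f j).filter fun x => InCminus A a b x).card
        ≤ ((f 0).filter fun x => InCminus A a b x).card := by
    intro j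
    induction j using Fin.induction with
    | zero => exact le_refl _
    | succ i ih => exact (hle i).trans ih
  have hlb : ∀ j : Fin (ℓ + 1),
      ((f (Fin.last ℓ)).filter fun x => InCminus A a b x).card
        ≤ ((f j).filter fun x => InCminus A a b x).card := by
    intro j
    induction j using Fin.reverseInduction with
    | last => exact le_refl _
    | cast i ih => exact le_trans ih (hle i)
  have hw : wArc A (f 0) (f (Fin.last ℓ)) a b
      = ((((f 0).filter fun x => InCminus A a b x).card : ℤ)
          - (((f (Fin.last ℓ)).filter fun x => InCminus A a b x).card : ℤ)) := rfl
  rw [hw]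
  constructor
  · rintro h0 i ⟨h1, h2⟩
    have hdec := slide_decrease hT hab h1 h2
    have l1 := hlb i.succ
    have l2 := hub i.castSucc
    omega
  · intro hno
    have heq : ∀ j : Fin (ℓ + 1),
        ((f j).filter fun x => InCminus A a b x).card
          = ((f 0).filter fun x => InCminus A a b x).card := by
      intro j
      induction j using Fin.induction with
      | zero => rfl
      | succ i ih =>
        rcases step_effect hT hab (hstep i) with h | h
        · rw [← ih]; exact h
        · exact absurd h (hno i)
    rw [heq (Fin.last ℓ)]
    omega

end AuxStmt5

/-- In every reconfiguration sequence from `I⁰` to `Iᵗ`, the set of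
vertices whose token never moves is exactly
`R = {v ∈ I⁰ ∩ Iᵗ : w(e) = 0 for all arcs e incident to v}`. -/
theorem stmt_5 [Fintype V] [DecidableEq V] (A : V → V → Prop) (hT : IsPolytree A)
    (I0 It : Finset V) (h0 : IndepF A I0) (ht : IndepF A It) (hcard : I0.card = It.card)
    {ℓ : ℕ} (f : Fin (ℓ + 1) → Finset V) (hf : IsReconfSeq A f)
    (hstart : f 0 = I0) (hend : f (Fin.last ℓ) = It) :
    {v : V | ∀ i, v ∈ f i} = {v : V | RigidTok A I0 It v} := by
  subst hstart hend
  obtain ⟨hind, hstep⟩ := hf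
  ext v
  simp only [Set.mem_setOf_eq, RigidTok]
  constructor
  · intro hv
    refine ⟨hv 0, hv _, ?_⟩
    intro a b hab hincid
    rw [warc_zero_iff hT hab hstep]
    rintro i ⟨h1, h2⟩
    have ha : a ∉ f i.succ := by
      have : a ∈ f i.castSucc \ f i.succ := by
        rw [h1]; exact Finset.mem_singleton_self a
      exact (Finset.mem_sdiff.mp this).2
    have hb : b ∉ f i.castSucc := by
      have : b ∈ f i.succ \ f i.castSucc := by
        rw [h2]; exact Finset.mem_singleton_self b
      exact (Finset.mem_sdiff.mp this).2
    rcases hincid with rfl | rfl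
    · exact ha (hv _)
    · exact hb (hv _)
  · rintro ⟨h0, ht', hw⟩ i
    induction i using Fin.induction with
    | zero => exact h0
    | succ j ih =>
      by_contra hvn
      obtain ⟨u, u', huu', h1, h2⟩ := hstep j
      have hu : u = v := by
        have : v ∈ f j.castSucc \ f j.succ := Finset.mem_sdiff.mpr ⟨ih, hvn⟩
        rw [h1] at this
        exact (Finset.mem_singleton.mp this).symm
      subst hu
      have hz := hw u u' huu' (Or.inl rfl)
      rw [warc_zero_iff hT huu' hstep] at hz
      exact hz j ⟨h1, h2⟩
end
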